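/- If C = {y ∈ ℝ^d : ⟨u_i, y⟩ ≤ 0 for i = 1,…,d} is a simplicial cone with linearly independent normals u_1,…,u_d, and x ∈ int(C), then d! · vol((C − x)°) = |det(u_1,…,u_d)| / ∏_i (−⟨u_i, x⟩). -/

import Mathlib

open scoped RealInnerProductSpace

open MeasureTheory

lemma vol_corner : ∀ (n : ℕ) (c : ℝ), 0 ≤ c →
    volume {t : Fin n → ℝ | (∀ i, 0 ≤ t i) ∧ ∑ i, t i ≤ c}
      = ENNReal.ofReal (c ^ n / n.factorial) := by
  intro n
  induction n with
  | zero =>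
      intro c hc
      have : {t : Fin 0 → ℝ | (∀ i, 0 ≤ t i) ∧ ∑ i, t i ≤ c} = Set.univ := by
        ext t; simp [hc]
      rw [this]
      rw [volume_pi, Measure.pi_univ]; simp
  | succ n ih =>
      intro c hc
      have mp := MeasureTheory.volume_preserving_piFinSuccAbove (fun _ : Fin (n+1) => ℝ) 0
      set T : Set (ℝ × (Fin n → ℝ)) :=
        {p | 0 ≤ p.1 ∧ (∀ i, 0 ≤ p.2 i) ∧ p.1 + ∑ i, p.2 i ≤ c} with hT
      have hTm : MeasurableSet T := by
        have : T = {p : ℝ × (Fin n → ℝ) | 0 ≤ p.1} ∩ ((⋂ i, {p : ℝ × (Fin n → ℝ) | 0 ≤ p.2 i})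
            ∩ {p : ℝ × (Fin n → ℝ) | p.1 + ∑ i, p.2 i ≤ c}) := by
          ext p; simp [hT, Set.mem_iInter, and_assoc]
        rw [this]
        refine (measurableSet_le measurable_const measurable_fst).inter
          ((MeasurableSet.iInter fun i => measurableSet_le measurable_const
            ((measurable_pi_apply i).comp measurable_snd)).inter
            (measurableSet_le (measurable_fst.add (Finset.measurable_sum _ fun i _ =>
              (measurable_pi_apply i).comp measurable_snd)) measurable_const))
      have hpre : {t : Fin (n+1) → ℝ | (∀ i, 0 ≤ t i) ∧ ∑ i, t i ≤ c}
          = (MeasurableEquiv.piFinSuccAbove (fun _ : Fin (n+1) => ℝ) 0) ⁻¹' T := by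
        ext t
        have hs : ∑ i, t i = t 0 + ∑ i : Fin n, t i.succ := Fin.sum_univ_succ t
        simp only [Set.mem_preimage, Set.mem_setOf_eq, hT, MeasurableEquiv.piFinSuccAbove_apply,
          Fin.insertNthEquiv_symm_apply, Fin.removeNth, Fin.zero_succAbove]
        constructor
        · rintro ⟨h1, h2⟩
          exact ⟨h1 0, fun i => h1 _, by rw [← hs]; exact h2⟩
        · rintro ⟨h1, h2, h3⟩
          refine ⟨fun i => ?_, by rw [hs]; exact h3⟩
          rcases Fin.eq_zero_or_eq_succ i with rfl | ⟨j, rfl⟩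
          · exact h1
          · exact h2 j
      rw [hpre, mp.measure_preimage hTm.nullMeasurableSet]
      rw [show (volume : Measure (ℝ × (Fin n → ℝ))) = (volume : Measure ℝ).prod volume from rfl,
        Measure.prod_apply hTm]
      have hslice : ∀ s : ℝ, volume (Prod.mk s ⁻¹' T)
          = Set.indicator (Set.Icc 0 c) (fun s => ENNReal.ofReal ((c - s) ^ n / n.factorial)) s := by
        intro s
        by_cases hs : s ∈ Set.Icc (0:ℝ) c
        · rw [Set.indicator_of_mem hs]
          have h : Prod.mk s ⁻¹' T = {t : Fin n → ℝ | (∀ i, 0 ≤ t i) ∧ ∑ i, t i ≤ c - s} := by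
            ext t
            simp only [Set.mem_preimage, hT, Set.mem_setOf_eq]
            constructor
            · rintro ⟨_, h2, h3⟩; exact ⟨h2, by linarith⟩
            · rintro ⟨h2, h3⟩; exact ⟨hs.1, h2, by linarith⟩
          rw [h, ih _ (by linarith [hs.2])]
        · rw [Set.indicator_of_notMem hs]
          have h : Prod.mk s ⁻¹' T = (∅ : Set (Fin n → ℝ)) := by
            ext t
            simp only [Set.mem_preimage, hT, Set.mem_setOf_eq, Set.mem_empty_iff_false, iff_false]
            rintro ⟨h1, h2, h3⟩
            rw [Set.mem_Icc, not_and_or, not_le, not_le] at hs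
            rcases hs with h | h
            · linarith
            · have : (0:ℝ) ≤ ∑ i, t i := Finset.sum_nonneg fun i _ => h2 i
              linarith
          rw [h, measure_empty]
      simp_rw [hslice]
      rw [lintegral_indicator measurableSet_Icc]
      have hint : IntegrableOn (fun s : ℝ => (c - s) ^ n / n.factorial) (Set.Icc 0 c) volume := by
        apply Continuous.integrableOn_Icc
        continuity
      have hnn : 0 ≤ᵐ[volume.restrict (Set.Icc (0:ℝ) c)] fun s : ℝ => (c - s) ^ n / n.factorial := by
        filter_upwards [self_mem_ae_restrict measurableSet_Icc] with s hs
        have : (0:ℝ) ≤ (c - s) ^ n := pow_nonneg (by linarith [hs.2]) n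
        positivity
      rw [← ofReal_integral_eq_lintegral_ofReal hint hnn]
      congr 1
      rw [MeasureTheory.integral_Icc_eq_integral_Ioc, ← intervalIntegral.integral_of_le hc]
      have : ∫ s in (0:ℝ)..c, (c - s) ^ n / n.factorial
          = (∫ s in (0:ℝ)..c, (c - s) ^ n) / n.factorial := by
        simp [intervalIntegral.integral_div]
      rw [this, intervalIntegral.integral_comp_sub_left (fun s => s ^ n) c, sub_self, sub_zero,
        integral_pow]
      rw [Nat.factorial_succ]
      push_cast
      field_simp
      simp


/-- For a simplicial cone `C = {y : ⟪u i, y⟫ ≤ 0, i = 1,…,d}` with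
linearly independent normals `u 1,…,u d` and `x ∈ int C`,
`d! · vol((C - x)°) = |det(u 1,…,u d)| / ∏ i (-⟪u i, x⟫)`. -/
theorem stmt2 (d : ℕ) (u : Fin d → EuclideanSpace ℝ (Fin d))
    (hu : LinearIndependent ℝ u)
    (C : Set (EuclideanSpace ℝ (Fin d)))
    (hC : C = {y | ∀ i, ⟪u i, y⟫ ≤ 0})
    (x : EuclideanSpace ℝ (Fin d)) (hx : x ∈ interior C)
    (U : Matrix (Fin d) (Fin d) ℝ)
    (hU : ∀ r c, U r c = u c r) :
    (Nat.factorial d : ℝ) *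
      (MeasureTheory.volume
        {z : EuclideanSpace ℝ (Fin d) | ∀ y ∈ C, ⟪z, y - x⟫ ≤ (1 : ℝ)}).toReal
      = |U.det| / ∏ i, (-⟪u i, x⟫) := by
  classical
  subst hC
  -- positivity of the lambdas
  have hL : ∀ i, 0 < -⟪u i, x⟫ := by
    intro i
    obtain ⟨ε, hε, hball⟩ := Metric.isOpen_iff.mp isOpen_interior x hx
    have hui : u i ≠ 0 := hu.ne_zero i
    have hnorm : 0 < ‖u i‖ := norm_pos_iff.mpr hui
    have hy : x + (ε / (2 * ‖u i‖)) • u i ∈ {y : EuclideanSpace ℝ (Fin d) | ∀ i, ⟪u i, y⟫ ≤ 0} := by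
      apply interior_subset
      apply hball
      rw [Metric.mem_ball, dist_eq_norm]
      simp only [add_sub_cancel_left, norm_smul, Real.norm_eq_abs]
      rw [abs_of_pos (by positivity)]
      have : ε / (2 * ‖u i‖) * ‖u i‖ = ε / 2 := by field_simp
      rw [this]; linarith
    have h3 := hy i
    rw [inner_add_right, real_inner_smul_right, real_inner_self_eq_norm_sq] at h3
    have h4 : ε / (2 * ‖u i‖) * ‖u i‖ ^ 2 = ε * ‖u i‖ / 2 := by field_simp
    rw [h4] at h3
    nlinarith [mul_pos hε hnorm]
  set L : Fin d → ℝ := fun i => -⟪u i, x⟫ with hLdef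
  have hLpos : ∀ i, 0 < L i := hL
  -- U invertible
  have hUdet : U.det ≠ 0 := by
    have h1 : LinearIndependent ℝ (fun i => U.transpose i) := by
      have h2 := hu.map' (WithLp.linearEquiv 2 ℝ (Fin d → ℝ)).toLinearMap
        (WithLp.linearEquiv 2 ℝ (Fin d → ℝ)).ker
      convert h2 using 2 with i
      ext j
      simp [Matrix.transpose_apply, hU]
      all_goals rfl
    have := Matrix.linearIndependent_cols_iff_isUnit.mp h1
    exact ((Matrix.isUnit_iff_isUnit_det U).mp this).ne_zero
  have hUunit : IsUnit U.det := isUnit_iff_ne_zero.mpr hUdet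
  -- the matrix M and linear map f
  set M : Matrix (Fin d) (Fin d) ℝ := U * Matrix.diagonal (fun i => (L i)⁻¹) with hMdef
  have hMdet : M.det = U.det * ∏ i, (L i)⁻¹ := by
    rw [hMdef, Matrix.det_mul, Matrix.det_diagonal]
  have hprodpos : 0 < ∏ i, L i := Finset.prod_pos fun i _ => hL i
  have hMdet0 : M.det ≠ 0 := by
    rw [hMdet]
    exact mul_ne_zero hUdet
      (ne_of_gt (Finset.prod_pos fun i _ => inv_pos.mpr (hLpos i)))
  have hMunit : IsUnit M.det := isUnit_iff_ne_zero.mpr hMdet0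
  set f := Matrix.toEuclideanLin M with hfdef
  -- inner product formula
  have hMe : ∀ j i, M j i = (L i)⁻¹ * u i j := by
    intro j i
    rw [hMdef, Matrix.mul_diagonal, hU, mul_comm]
  have hfa : ∀ (t : EuclideanSpace ℝ (Fin d)) (j : Fin d), f t j = ∑ i, M j i * t i := by
    intro t j
    rw [hfdef, Matrix.toEuclideanLin_apply]
    rw [PiLp.toLp_apply]
    rfl
  have hinner : ∀ (t : EuclideanSpace ℝ (Fin d)) (w : EuclideanSpace ℝ (Fin d)),
      ⟪f t, w⟫ = ∑ i, t i * ((L i)⁻¹ * ⟪u i, w⟫) := by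
    intro t w
    simp only [PiLp.inner_apply, RCLike.inner_apply', starRingEnd_apply, star_trivial]
    calc ∑ j, f t j * w j = ∑ j, ∑ i, M j i * t i * w j := by
          refine Finset.sum_congr rfl fun j _ => ?_
          rw [hfa, Finset.sum_mul]
      _ = ∑ i, ∑ j, M j i * t i * w j := Finset.sum_comm
      _ = ∑ i, t i * ((L i)⁻¹ * ∑ j, u i j * w j) := by
          refine Finset.sum_congr rfl fun i _ => ?_
          rw [Finset.mul_sum, Finset.mul_sum]
          refine Finset.sum_congr rfl fun j _ => ?_
          rw [hMe]; ring
  have hinner_x : ∀ t : EuclideanSpace ℝ (Fin d), ⟪f t, x⟫ = -∑ i, t i := by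
    intro t
    rw [hinner, ← Finset.sum_neg_distrib]
    refine Finset.sum_congr rfl fun i _ => ?_
    have : ⟪u i, x⟫ = -L i := by rw [hLdef]; ring
    rw [this]
    have hLi : L i ≠ 0 := ne_of_gt (hLpos i)
    field_simp
  -- the key membership equivalence
  have key : ∀ t : EuclideanSpace ℝ (Fin d),
      ((∀ y ∈ {y : EuclideanSpace ℝ (Fin d) | ∀ i, ⟪u i, y⟫ ≤ 0}, ⟪f t, y - x⟫ ≤ (1:ℝ)) ↔
        ((∀ i, 0 ≤ t i) ∧ ∑ i, t i ≤ 1)) := by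
    intro t
    constructor
    · intro h
      constructor
      · intro j
        by_contra htj
        push_neg at htj
        -- dual vector
        set w : EuclideanSpace ℝ (Fin d) :=
          (WithLp.equiv 2 (Fin d → ℝ)).symm (fun k => U⁻¹ j k) with hwdef
        have hw : ∀ i, ⟪u i, w⟫ = if i = j then 1 else 0 := by
          intro i
          simp only [PiLp.inner_apply, RCLike.inner_apply', starRingEnd_apply, star_trivial]
          have : ∀ k, w k = U⁻¹ j k := fun k => by rw [hwdef, WithLp.equiv_symm_apply, PiLp.toLp_apply]
          calc ∑ k, u i k * w k = (U⁻¹ * U) j i := by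
                rw [Matrix.mul_apply]
                refine Finset.sum_congr rfl fun k _ => ?_
                rw [this, hU]; ring
            _ = if i = j then 1 else 0 := by
                rw [Matrix.nonsing_inv_mul U hUunit, Matrix.one_apply]
                simp [eq_comm]
        have hwt : ⟪f t, w⟫ = t j * (L j)⁻¹ := by
          rw [hinner]
          rw [Finset.sum_eq_single j]
          · rw [hw, if_pos rfl, mul_one]
          · intro i _ hij
            rw [hw, if_neg hij, mul_zero, mul_zero]
          · intro hj; exact absurd (Finset.mem_univ j) hj
        set s : ℝ := 2 * L j / (-t j) with hsdef
        have hs : 0 < s := by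
          apply div_pos (by linarith [hLpos j]) (by linarith)
        have hyC : x - s • w ∈ {y : EuclideanSpace ℝ (Fin d) | ∀ i, ⟪u i, y⟫ ≤ 0} := by
          intro i
          rw [inner_sub_right, real_inner_smul_right, hw]
          by_cases hij : i = j
          · rw [if_pos hij]
            have := hL i
            nlinarith
          · rw [if_neg hij, mul_zero, sub_zero]
            linarith [hL i]
        have := h _ hyC
        rw [show x - s • w - x = -(s • w) by abel, inner_neg_right, real_inner_smul_right,
          hwt] at this
        have hcomp : -(s * (t j * (L j)⁻¹)) = 2 := by
          have htj0 : t j ≠ 0 := ne_of_lt htj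
          have hLj0 : L j ≠ 0 := ne_of_gt (hLpos j)
          rw [hsdef]
          field_simp
        rw [hcomp] at this
        linarith
      · have h0 : (0 : EuclideanSpace ℝ (Fin d)) ∈
            {y : EuclideanSpace ℝ (Fin d) | ∀ i, ⟪u i, y⟫ ≤ 0} := by
          intro i; rw [inner_zero_right]
        have := h 0 h0
        rw [zero_sub, inner_neg_right, hinner_x] at this
        linarith
    · rintro ⟨h1, h2⟩ y hy
      rw [inner_sub_right, hinner_x, hinner, sub_neg_eq_add]
      have hsum : ∑ i, t i * ((L i)⁻¹ * ⟪u i, y⟫) ≤ 0 := by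
        apply Finset.sum_nonpos
        intro i _
        apply mul_nonpos_of_nonneg_of_nonpos (h1 i)
        apply mul_nonpos_of_nonneg_of_nonpos (le_of_lt (inv_pos.mpr (hL i)))
        exact hy i
      linarith
  -- surjectivity of f
  have hfsurj : Function.Surjective f := by
    intro z
    refine ⟨Matrix.toEuclideanLin M⁻¹ z, ?_⟩
    apply (WithLp.equiv 2 (Fin d → ℝ)).injective
    rw [hfdef]
    change Matrix.mulVec M (Matrix.mulVec M⁻¹ (WithLp.ofLp z)) = WithLp.ofLp z
    rw [Matrix.mulVec_mulVec, Matrix.mul_nonsing_inv M hMunit, Matrix.one_mulVec]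
  -- image description
  set S : Set (EuclideanSpace ℝ (Fin d)) := {t | (∀ i, 0 ≤ t i) ∧ ∑ i, t i ≤ 1} with hSdef
  have himg : {z : EuclideanSpace ℝ (Fin d) |
      ∀ y ∈ {y : EuclideanSpace ℝ (Fin d) | ∀ i, ⟪u i, y⟫ ≤ 0}, ⟪z, y - x⟫ ≤ (1:ℝ)} = f '' S := by
    ext z
    constructor
    · intro hz
      obtain ⟨t, rfl⟩ := hfsurj z
      exact ⟨t, (key t).mp hz, rfl⟩
    · rintro ⟨t, ht, rfl⟩
      exact (key t).mpr ht
  -- volume computation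
  have hSm : MeasurableSet {t : Fin d → ℝ | (∀ i, 0 ≤ t i) ∧ ∑ i, t i ≤ 1} := by
    have : {t : Fin d → ℝ | (∀ i, 0 ≤ t i) ∧ ∑ i, t i ≤ 1}
        = (⋂ i, {t : Fin d → ℝ | 0 ≤ t i}) ∩ {t : Fin d → ℝ | ∑ i, t i ≤ 1} := by
      ext t; simp [Set.mem_iInter]
    rw [this]
    exact (MeasurableSet.iInter fun i =>
        measurableSet_le measurable_const (measurable_pi_apply i)).inter
      (measurableSet_le (Finset.measurable_sum _ fun i _ => measurable_pi_apply i)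
        measurable_const)
  have hvolS : volume S = ENNReal.ofReal (1 / d.factorial) := by
    have hpre : S = (MeasurableEquiv.toLp 2 (Fin d → ℝ)).symm ⁻¹'
        {t : Fin d → ℝ | (∀ i, 0 ≤ t i) ∧ ∑ i, t i ≤ 1} := rfl
    rw [hpre, (EuclideanSpace.volume_preserving_symm_measurableEquiv_toLp (Fin d)).measure_preimage
      hSm.nullMeasurableSet, vol_corner d 1 zero_le_one, one_pow]
  have hdetf : LinearMap.det (f : EuclideanSpace ℝ (Fin d) →ₗ[ℝ] EuclideanSpace ℝ (Fin d))
      = M.det := by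
    rw [hfdef, Matrix.toEuclideanLin_eq_toLin]
    exact LinearMap.det_toLin _ _
  rw [himg, Measure.addHaar_image_linearMap, hdetf, hvolS,
    ← ENNReal.ofReal_mul (abs_nonneg _), ENNReal.toReal_ofReal (by positivity)]
  -- final arithmetic
  have habs : |M.det| = |U.det| * (∏ i, L i)⁻¹ := by
    rw [hMdet, abs_mul, abs_of_pos (Finset.prod_pos fun i _ => inv_pos.mpr (hLpos i)),
      Finset.prod_inv_distrib]
  rw [habs]
  have hd : (d.factorial : ℝ) ≠ 0 := Nat.cast_ne_zero.mpr d.factorial_ne_zero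
  have : ∏ i, -⟪u i, x⟫ = ∏ i, L i := rfl
  rw [this]
  field_simp
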